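/- For every odd positive integer m and all integers n ≥ 0, r ≥ 0, the generalized degenerate Euler-Genocchi polynomials satisfy the distribution relation A^{(r)}_{n,λ}(x) = m^{n−r} · ∑_{l=0}^{m−1} (−1)^l · A^{(r)}_{n,λ/m}((l+x)/m). -/

import Mathlib

open Finset

noncomputable section

/-- The generalized falling factorial `(x)_{n,λ} = x(x-λ)⋯(x-(n-1)λ)`. -/
def gff (lam x : ℝ) (n : ℕ) : ℝ := ∏ i ∈ Finset.range n, (x - i * lam)

/-- The ordinary falling factorial `(x)_r = x(x-1)⋯(x-r+1)` of a real number. -/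
def ff (x : ℝ) (r : ℕ) : ℝ := ∏ i ∈ Finset.range r, (x - i)

/-- The degenerate exponential `e_λ^x(t) = ∑_{n≥0} (x)_{n,λ} t^n/n!` as a formal power series. -/
def degExp (lam x : ℝ) : PowerSeries ℝ :=
  PowerSeries.mk fun n => gff lam x n / n.factorial

/-- `egfCoeff f n = a_n` when `f = ∑_{n≥0} a_n t^n/n!`. -/
def egfCoeff (f : PowerSeries ℝ) (n : ℕ) : ℝ := n.factorial * PowerSeries.coeff (R := ℝ) n f

/-- The formal binomial power `(1+g)^a = ∑_{k≥0} (a)_k/k! · g^k`,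
intended for `g` with zero constant term (so the sum is coefficientwise finite). -/
def binomPow (a : ℝ) (g : PowerSeries ℝ) : PowerSeries ℝ :=
  PowerSeries.mk fun n =>
    ∑ k ∈ Finset.range (n + 1), (ff a k / k.factorial) * PowerSeries.coeff (R := ℝ) n (g ^ k)

/-- `(2/(e_λ(t)+1))^α`, the `(-α)`-th formal binomial power of `(e_λ(t)+1)/2 = 1 + (e_λ(t)-1)/2`. -/
def eulerGF (lam a : ℝ) : PowerSeries ℝ :=
  binomPow (-a) (PowerSeries.C (R := ℝ) (1 / 2) * (degExp lam 1 - 1))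

/-- Generalized degenerate Euler-Genocchi polynomials `A^{(r)}_{n,λ}(x)`, defined by
`∑_{n≥0} A^{(r)}_{n,λ}(x) t^n/n! = 2 t^r e_λ^x(t)/(e_λ(t)+1)`. -/
def A (lam : ℝ) (r : ℕ) (x : ℝ) (n : ℕ) : ℝ :=
  egfCoeff (2 * PowerSeries.X ^ r * degExp lam x * (degExp lam 1 + 1)⁻¹) n

/-- Generalized degenerate Euler-Genocchi polynomials of order `α`, `A^{(r,α)}_{n,λ}(x)`,
defined by `∑_{n≥0} A^{(r,α)}_{n,λ}(x) t^n/n! = t^r (2/(e_λ(t)+1))^α e_λ^x(t)`. -/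
def Aa (lam a : ℝ) (r : ℕ) (x : ℝ) (n : ℕ) : ℝ :=
  egfCoeff (PowerSeries.X ^ r * eulerGF lam a * degExp lam x) n

/-- Degenerate Euler polynomials of order `α`:
`∑_{n≥0} E^{(α)}_{n,λ}(x) t^n/n! = (2/(e_λ(t)+1))^α e_λ^x(t)`. -/
def Epoly (lam a x : ℝ) (n : ℕ) : ℝ := egfCoeff (eulerGF lam a * degExp lam x) n

/-- Degenerate Euler polynomials `E_{n,λ}(x)`:
`∑_{n≥0} E_{n,λ}(x) t^n/n! = 2 e_λ^x(t)/(e_λ(t)+1)`. -/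
def E1 (lam x : ℝ) (n : ℕ) : ℝ :=
  egfCoeff (2 * degExp lam x * (degExp lam 1 + 1)⁻¹) n

/-- Degenerate Euler numbers `E_{n,λ}`: `∑_{n≥0} E_{n,λ} t^n/n! = 2/(e_λ(t)+1)`. -/
def Enum (lam : ℝ) (n : ℕ) : ℝ :=
  egfCoeff (2 * (degExp lam 1 + 1)⁻¹) n

/-- Degenerate Stirling numbers of the second kind:
`∑_{n≥k} S_{2,λ}(n,k) t^n/n! = (1/k!)(e_λ(t)-1)^k`. -/
def S2 (lam : ℝ) (n k : ℕ) : ℝ :=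
  egfCoeff (PowerSeries.C (R := ℝ) (1 / k.factorial) * (degExp lam 1 - 1) ^ k) n

/-- Alternating degenerate power sum `T_{k,λ}(n) = ∑_{i=0}^n (-1)^i (i)_{k,λ}`. -/
def T (lam : ℝ) (k n : ℕ) : ℝ := ∑ i ∈ Finset.range (n + 1), (-1 : ℝ) ^ i * gff lam i k

lemma gff_succ (lam x : ℝ) (n : ℕ) : gff lam x (n+1) = gff lam x n * (x - n * lam) := by
  simp [gff, Finset.prod_range_succ]

lemma gff_vandermonde (lam x y : ℝ) (n : ℕ) :
    gff lam (x + y) n =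
      ∑ k ∈ Finset.range (n+1), (n.choose k : ℝ) * gff lam x k * gff lam y (n-k) := by
  induction n with
  | zero => simp [gff]
  | succ n ih =>
    rw [gff_succ, ih, Finset.sum_mul]
    have hterm : ∀ k ∈ Finset.range (n+1),
        (n.choose k : ℝ) * gff lam x k * gff lam y (n-k) * (x + y - n * lam)
          = (n.choose k : ℝ) * gff lam x (k+1) * gff lam y (n-k)
            + (n.choose k : ℝ) * gff lam x k * gff lam y (n+1-k) := by
      intro k hk
      have hk' : k ≤ n := Nat.lt_succ_iff.mp (Finset.mem_range.mp hk)
      have hs : n + 1 - k = (n - k) + 1 := by omega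
      rw [hs, gff_succ, gff_succ]
      have hcast : ((n - k : ℕ) : ℝ) = (n : ℝ) - k := by
        rw [Nat.cast_sub hk']
      have : x + y - n * lam = (x - k * lam) + (y - ((n-k : ℕ)) * lam) := by
        rw [hcast]; ring
      rw [this]; ring
    rw [Finset.sum_congr rfl hterm, Finset.sum_add_distrib]
    -- RHS
    rw [Finset.sum_range_succ' (fun k => ((n+1).choose k : ℝ) * gff lam x k * gff lam y (n+1-k)) (n+1)]
    have h1 : ∀ k ∈ Finset.range (n+1),
        (((n+1).choose (k+1) : ℕ) : ℝ) * gff lam x (k+1) * gff lam y (n+1-(k+1))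
        = (n.choose k : ℝ) * gff lam x (k+1) * gff lam y (n-k)
          + (n.choose (k+1) : ℝ) * gff lam x (k+1) * gff lam y (n-k) := by
      intro k hk
      rw [Nat.choose_succ_succ, Nat.cast_add]
      have : n+1-(k+1) = n - k := by omega
      rw [this]; ring
    rw [Finset.sum_congr rfl h1, Finset.sum_add_distrib]
    have h2 : ∑ k ∈ Finset.range (n+1), (n.choose (k+1) : ℝ) * gff lam x (k+1) * gff lam y (n-k)
        = ∑ k ∈ Finset.range (n+1), (n.choose k : ℝ) * gff lam x k * gff lam y (n+1-k)
          - gff lam y (n+1) := by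
      have hz : ∑ k ∈ Finset.range (n+1), (n.choose k : ℝ) * gff lam x k * gff lam y (n+1-k)
          = ∑ k ∈ Finset.range (n+1+1), (n.choose k : ℝ) * gff lam x k * gff lam y (n+1-k) := by
        rw [Finset.sum_range_succ (fun k => (n.choose k : ℝ) * gff lam x k * gff lam y (n+1-k)) (n+1)]
        simp [Nat.choose_succ_self]
      rw [hz, Finset.sum_range_succ' (fun k => (n.choose k : ℝ) * gff lam x k * gff lam y (n+1-k)) (n+1)]
      simp only [Nat.choose_zero_right, Nat.cast_one, one_mul]
      have h3 : ∀ k ∈ Finset.range (n+1), (n.choose (k+1) : ℝ) * gff lam x (k+1) * gff lam y (n+1-(k+1))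
          = (n.choose (k+1) : ℝ) * gff lam x (k+1) * gff lam y (n-k) := by
        intro k hk
        have : n+1-(k+1) = n-k := by omega
        rw [this]
      rw [Finset.sum_congr rfl h3]
      simp [gff]
    rw [h2]
    simp only [Nat.choose_zero_right, Nat.cast_one, one_mul, gff, Finset.prod_range_zero,
      Nat.sub_zero]
    ring


lemma degExp_mul (lam x y : ℝ) : degExp lam x * degExp lam y = degExp lam (x + y) := by
  ext n
  rw [PowerSeries.coeff_mul, Finset.Nat.sum_antidiagonal_eq_sum_range_succ_mk]
  simp only [degExp, PowerSeries.coeff_mk]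
  rw [gff_vandermonde, Finset.sum_div]
  refine Finset.sum_congr rfl fun k hk => ?_
  have hk' : k ≤ n := Nat.lt_succ_iff.mp (Finset.mem_range.mp hk)
  rw [Nat.cast_choose ℝ hk']
  have h1 : (k.factorial : ℝ) ≠ 0 := Nat.cast_ne_zero.mpr k.factorial_ne_zero
  have h2 : ((n-k).factorial : ℝ) ≠ 0 := Nat.cast_ne_zero.mpr (n-k).factorial_ne_zero
  have h3 : (n.factorial : ℝ) ≠ 0 := Nat.cast_ne_zero.mpr n.factorial_ne_zero
  field_simp

lemma constantCoeff_degExp (lam x : ℝ) : PowerSeries.constantCoeff (R := ℝ) (degExp lam x) = 1 := by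
  simp [degExp, ← PowerSeries.coeff_zero_eq_constantCoeff, gff]

lemma degExp_zero (lam : ℝ) : degExp lam 0 = 1 := by
  ext n
  simp only [degExp, PowerSeries.coeff_mk, PowerSeries.coeff_one]
  cases n with
  | zero => simp [gff]
  | succ n => simp [gff, Finset.prod_range_succ']

lemma degExp_pow (lam : ℝ) (k : ℕ) : (degExp lam 1) ^ k = degExp lam k := by
  induction k with
  | zero => simp [degExp_zero]
  | succ k ih => rw [pow_succ, ih, degExp_mul]; push_cast; ring_nf

lemma gff_smul (c lam x : ℝ) (n : ℕ) : gff (c * lam) (c * x) n = c ^ n * gff lam x n := by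
  rw [gff, gff]
  have h : ∀ i : ℕ, c * x - i * (c * lam) = c * (x - i * lam) := fun i => by ring
  simp only [h]
  rw [Finset.prod_mul_distrib, Finset.prod_const, Finset.card_range]

lemma rescale_degExp (c lam x : ℝ) :
    PowerSeries.rescale c (degExp lam x) = degExp (c * lam) (c * x) := by
  ext n
  rw [PowerSeries.coeff_rescale]
  simp [degExp, gff_smul, mul_div_assoc]

lemma rescale_inv (c : ℝ) (f : PowerSeries ℝ) (h : PowerSeries.constantCoeff (R := ℝ) f ≠ 0) :
    PowerSeries.rescale c f⁻¹ = (PowerSeries.rescale c f)⁻¹ := by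
  have h2 : PowerSeries.constantCoeff (R := ℝ) (PowerSeries.rescale c f) ≠ 0 := by
    rwa [← PowerSeries.coeff_zero_eq_constantCoeff, PowerSeries.coeff_rescale, pow_zero, one_mul,
      PowerSeries.coeff_zero_eq_constantCoeff]
  rw [eq_comm, PowerSeries.inv_eq_iff_mul_eq_one h2, ← map_mul,
    PowerSeries.inv_mul_cancel _ h, map_one]

lemma geom_odd (u : PowerSeries ℝ) (m : ℕ) (hodd : Odd m) :
    (∑ l ∈ Finset.range m, (-1 : PowerSeries ℝ) ^ l * u ^ l) * (u + 1) = u ^ m + 1 := by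
  have hg := geom_sum_mul (-u) m
  have : ∀ l, (-1 : PowerSeries ℝ) ^ l * u ^ l = (-u) ^ l := fun l => (neg_pow u l).symm
  simp only [this]
  have hneg : (-u) ^ m = -(u ^ m) := hodd.neg_pow u
  have := hg
  rw [hneg] at this
  have h2 : (∑ i ∈ Finset.range m, (-u) ^ i) * (u + 1) = -((∑ i ∈ Finset.range m, (-u) ^ i) * (-u - 1)) := by ring
  rw [h2, this]; ring



lemma rescale_C' (c a : ℝ) :
    PowerSeries.rescale c (PowerSeries.C (R := ℝ) a) = PowerSeries.C (R := ℝ) a := by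
  ext k
  rw [PowerSeries.coeff_rescale]
  cases k with
  | zero => simp
  | succ k => simp [PowerSeries.coeff_C]

/-- Theorem 2 of the paper: for odd `m ∈ ℕ`, `m ≥ 1`, and `n, r ≥ 0`,
`A^{(r)}_{n,λ}(x) = m^{n-r} ∑_{l=0}^{m-1} (-1)^l A^{(r)}_{n,λ/m}((l+x)/m)`. -/
theorem A_distribution (lam : ℝ) (hlam : lam ≠ 0) (x : ℝ) (m : ℕ) (hm : 0 < m)
    (hodd : Odd m) (n r : ℕ) :
    A lam r x n =
      (m : ℝ) ^ ((n : ℤ) - (r : ℤ)) *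
        ∑ l ∈ Finset.range m, (-1 : ℝ) ^ l * A (lam / m) r ((l + x) / m) n := by
  have hm0 : (m : ℝ) ≠ 0 := Nat.cast_ne_zero.mpr hm.ne'
  have hcu1 : PowerSeries.constantCoeff (R := ℝ) (degExp lam 1 + 1) ≠ 0 := by
    rw [map_add, constantCoeff_degExp, map_one]; norm_num
  have hcum : PowerSeries.constantCoeff (R := ℝ) ((degExp lam 1) ^ m + 1) ≠ 0 := by
    rw [map_add, map_pow, constantCoeff_degExp, one_pow, map_one]; norm_num
  -- core identity
  have hsum : (∑ l ∈ Finset.range m, PowerSeries.C (R := ℝ) ((-1 : ℝ) ^ l) * degExp lam (l + x))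
      = (∑ l ∈ Finset.range m, (-1 : PowerSeries ℝ) ^ l * (degExp lam 1) ^ l) * degExp lam x := by
    rw [Finset.sum_mul]
    refine Finset.sum_congr rfl fun l hl => ?_
    rw [map_pow, map_neg, map_one, mul_assoc, degExp_pow, degExp_mul]
  have hcore : degExp lam x * ((degExp lam 1) ^ m + 1)
      = (∑ l ∈ Finset.range m, PowerSeries.C (R := ℝ) ((-1 : ℝ) ^ l) * degExp lam (l + x))
          * (degExp lam 1 + 1) := by
    rw [hsum, ← geom_odd (degExp lam 1) m hodd]; ring
  -- inverse version
  have hinv : degExp lam x * (degExp lam 1 + 1)⁻¹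
      = (∑ l ∈ Finset.range m, PowerSeries.C (R := ℝ) ((-1 : ℝ) ^ l) * degExp lam (l + x))
        * ((degExp lam 1) ^ m + 1)⁻¹ := by
    rw [PowerSeries.eq_mul_inv_iff_mul_eq hcum]
    calc degExp lam x * (degExp lam 1 + 1)⁻¹ * ((degExp lam 1) ^ m + 1)
        = degExp lam x * ((degExp lam 1) ^ m + 1) * (degExp lam 1 + 1)⁻¹ := by ring
      _ = (∑ l ∈ Finset.range m, PowerSeries.C (R := ℝ) ((-1 : ℝ) ^ l) * degExp lam (l + x))
            * ((degExp lam 1 + 1) * (degExp lam 1 + 1)⁻¹) := by rw [hcore]; ring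
      _ = _ := by rw [PowerSeries.mul_inv_cancel _ hcu1, mul_one]
  -- the rescaled identity
  have hmu1 : (m : ℝ) * (lam / m) = lam := by field_simp
  have H : PowerSeries.C (R := ℝ) ((m : ℝ) ^ r) *
        (2 * PowerSeries.X ^ r * degExp lam x * (degExp lam 1 + 1)⁻¹)
      = PowerSeries.rescale (m : ℝ)
          (∑ l ∈ Finset.range m, PowerSeries.C (R := ℝ) ((-1 : ℝ) ^ l) *
            (2 * PowerSeries.X ^ r * degExp (lam / m) ((l + x) / m) *
              (degExp (lam / m) 1 + 1)⁻¹)) := by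
    rw [map_sum]
    have hre : ∀ l : ℕ, PowerSeries.rescale (m : ℝ)
        (PowerSeries.C (R := ℝ) ((-1 : ℝ) ^ l) *
          (2 * PowerSeries.X ^ r * degExp (lam / m) ((l + x) / m) *
            (degExp (lam / m) 1 + 1)⁻¹))
        = PowerSeries.C (R := ℝ) ((-1 : ℝ) ^ l) *
            (PowerSeries.C (R := ℝ) ((m : ℝ) ^ r) * (2 * PowerSeries.X ^ r * degExp lam (l + x) *
              ((degExp lam 1) ^ m + 1)⁻¹)) := by
      intro l
      have h1 : PowerSeries.rescale (m : ℝ) ((degExp (lam / m) 1 + 1)⁻¹)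
          = ((degExp lam 1) ^ m + 1)⁻¹ := by
        rw [rescale_inv _ _ (by rw [map_add, constantCoeff_degExp, map_one]; norm_num),
          map_add, map_one, rescale_degExp, hmu1, mul_one, degExp_pow]
      have h2 : PowerSeries.rescale (m : ℝ) (degExp (lam / m) ((l + x) / m))
          = degExp lam (l + x) := by
        rw [rescale_degExp, hmu1]
        congr 1
        field_simp
      have h3 : PowerSeries.rescale (m : ℝ) (PowerSeries.X ^ r)
          = PowerSeries.C (R := ℝ) ((m : ℝ) ^ r) * PowerSeries.X ^ r := by
        rw [map_pow, PowerSeries.rescale_X, mul_pow, ← map_pow]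
      simp only [map_mul, map_ofNat, h1, h2, h3, rescale_C']
      ring
    simp only [hre]
    have hterm : ∀ l : ℕ, PowerSeries.C (R := ℝ) ((-1 : ℝ) ^ l) *
            (PowerSeries.C (R := ℝ) ((m : ℝ) ^ r) * (2 * PowerSeries.X ^ r * degExp lam (l + x) *
              ((degExp lam 1) ^ m + 1)⁻¹))
        = PowerSeries.C (R := ℝ) ((m : ℝ) ^ r) * (2 * PowerSeries.X ^ r) *
            ((PowerSeries.C (R := ℝ) ((-1 : ℝ) ^ l) * degExp lam (l + x)) *
              ((degExp lam 1) ^ m + 1)⁻¹) := fun l => by ring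
    simp only [hterm]
    rw [← Finset.mul_sum, ← Finset.sum_mul, ← hinv]
    ring
  -- extract coefficients
  have Hc := congrArg (fun f => (n.factorial : ℝ) * PowerSeries.coeff (R := ℝ) n f) H
  simp only [PowerSeries.coeff_C_mul, PowerSeries.coeff_rescale, map_sum] at Hc
  have hA : A lam r x n
      = PowerSeries.coeff (R := ℝ) n (2 * PowerSeries.X ^ r * degExp lam x * (degExp lam 1 + 1)⁻¹)
        * n.factorial := by
    rw [A, egfCoeff]; ring
  have hAl : ∀ l : ℕ, A (lam / m) r ((l + x) / m) n
      = PowerSeries.coeff (R := ℝ) n (2 * PowerSeries.X ^ r * degExp (lam / m) ((l + x) / m)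
          * (degExp (lam / m) 1 + 1)⁻¹) * n.factorial := by
    intro l; rw [A, egfCoeff]; ring
  have hfac : (n.factorial : ℝ) ≠ 0 := Nat.cast_ne_zero.mpr n.factorial_ne_zero
  rw [hA]
  simp only [hAl]
  rw [zpow_sub₀ hm0, zpow_natCast, zpow_natCast]
  rw [div_mul_eq_mul_div, eq_div_iff (pow_ne_zero r hm0)]
  have expand : ∀ l ∈ Finset.range m, (-1 : ℝ) ^ l *
        (PowerSeries.coeff (R := ℝ) n (2 * PowerSeries.X ^ r * degExp (lam / m) ((l + x) / m)
          * (degExp (lam / m) 1 + 1)⁻¹) * n.factorial)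
      = ((-1 : ℝ) ^ l * PowerSeries.coeff (R := ℝ) n (2 * PowerSeries.X ^ r *
          degExp (lam / m) ((l + x) / m) * (degExp (lam / m) 1 + 1)⁻¹)) * n.factorial :=
    fun l _ => by ring
  rw [Finset.sum_congr rfl expand, ← Finset.sum_mul]
  -- now use Hc
  set a := PowerSeries.coeff (R := ℝ) n (2 * PowerSeries.X ^ r * degExp lam x * (degExp lam 1 + 1)⁻¹) with ha
  rw [← Finset.mul_sum] at Hc
  have key := mul_left_cancel₀ hfac Hc
  linear_combination (n.factorial : ℝ) * key
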